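/- For all s ∈ μ_r, v ∈ A_1, and w ∈ A_r: (zv) ⋄_s (zw) = z(v ⋄_s zw + zv ⋄_s w − z(v ⋄_s w)). -/
import Mathlib


open FreeAlgebra

/-- Alphabet of `A_1 = ℚ⟨x,y⟩`. -/
inductive LetA : Type | x : LetA | y : LetA

/-- Alphabet of `A_r = ℚ⟨x, y_s : s ∈ μ_r⟩`; the group `G` plays the role of `μ_r`. -/
inductive LetR (G : Type) : Type | x : LetR G | y : G → LetR G

/-- `A_1 = ℚ⟨x, y⟩`. -/
abbrev A1 : Type := FreeAlgebra ℚ LetA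

/-- `A_r = ℚ⟨x, y_s : s ∈ μ_r⟩`. -/
abbrev Ar (G : Type) : Type := FreeAlgebra ℚ (LetR G)

noncomputable def X1 : A1 := ι ℚ LetA.x
noncomputable def Y1 : A1 := ι ℚ LetA.y

variable {G : Type} [CommGroup G]

noncomputable def Xr : Ar G := ι ℚ LetR.x
noncomputable def Yr (s : G) : Ar G := ι ℚ (LetR.y s)

/-- `z = x + y_1`. -/
noncomputable def zet : Ar G := Xr + Yr 1

open scoped Classical in
/-- `z_s^δ = x + δ(s) y_s` with `δ(1) = 0`, `δ(s) = 1` otherwise. -/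
noncomputable def zdel (s : G) : Ar G := if s = 1 then Xr else Xr + Yr s

/-- The involutive automorphism `φ` of `A_r`: `φ(x) = z`, `φ(y_s) = z_s^δ - z`. -/
noncomputable def phi : Ar G →ₐ[ℚ] Ar G :=
  lift ℚ (fun l => match l with
    | LetR.x => zet
    | LetR.y s => zdel s - zet)

/-- The natural embedding `A_1 → A_r`, `x ↦ x`, `y ↦ y_1`. -/
noncomputable def jm : A1 →ₐ[ℚ] Ar G :=
  lift ℚ (fun l => match l with
    | LetA.x => Xr
    | LetA.y => Yr 1)

open scoped Classical in
/-- The anti-automorphism `τ` of `A_r`: `τ(x) = y_1`, `τ(y_1) = x`, `τ(y_s) = -y_s` (`s ≠ 1`). -/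
noncomputable def tauR : Ar G →ₗ[ℚ] Ar G :=
  (MulOpposite.opLinearEquiv ℚ).symm.toLinearMap ∘ₗ
    (lift ℚ (fun l => match l with
      | LetR.x => MulOpposite.op (Yr 1)
      | LetR.y s => MulOpposite.op (if s = 1 then Xr else -(Yr s)) ) :
        Ar G →ₐ[ℚ] (Ar G)ᵐᵒᵖ).toLinearMap

/-- The anti-automorphism `τ` of `A_1`: `τ(x) = y`, `τ(y) = x`. -/
noncomputable def tau1 : A1 →ₗ[ℚ] A1 :=
  (MulOpposite.opLinearEquiv ℚ).symm.toLinearMap ∘ₗ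
    (lift ℚ (fun l => match l with
      | LetA.x => MulOpposite.op Y1
      | LetA.y => MulOpposite.op X1) : A1 →ₐ[ℚ] A1ᵐᵒᵖ).toLinearMap

/-- `wordP [(a₁,s₁),...,(a_l,s_l)] = x^{a₁} y_{s₁} ⋯ x^{a_l} y_{s_l}`,
i.e. the word `z_{a₁+1, s₁} ⋯ z_{a_l+1, s_l}`. -/
noncomputable def wordP (L : List (ℕ × G)) : Ar G :=
  (L.map (fun p => Xr ^ p.1 * Yr p.2)).prod

/-- Cumulative-product reindexing of subscripts: this realizes the composition `I ∘ M_s`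
on subscript lists, sending `(s₁, s₂, …, s_l)` to `(s s₁, s s₁ s₂, …, s s₁ ⋯ s_l)`. -/
def cumul : G → List (ℕ × G) → List (ℕ × G)
  | _, [] => []
  | g, p :: L => (p.1, g * p.2) :: cumul (g * p.2) L

/-- All the data entering the definition of the diamond products `⋄_s`:
the harmonic product `*`, the maps `ψ_s = φ ∘ I ∘ M_s`, and the family of
`ℚ`-bilinear diamond products `D s : A_1 × A_r → A_r` (together with the
corestriction `D1` of `⋄_1` to `A_1 × A_1 → A_1`), each characterized by its
defining recursive rules. -/
structure DiamondSetup (G : Type) [CommGroup G] where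
  /-- the harmonic product -/
  hst : Ar G →ₗ[ℚ] Ar G →ₗ[ℚ] Ar G
  one_hst : ∀ w, hst 1 w = w
  hst_one : ∀ v, hst v 1 = v
  hst_xr : ∀ v w, hst (v * Xr) w = hst v w * Xr
  hst_xl : ∀ v w, hst v (w * Xr) = hst v w * Xr
  hst_yy : ∀ (v w : Ar G) (s t : G), hst (v * Yr s) (w * Yr t) =
      hst v (w * Yr t) * Yr s + hst (v * Yr s) w * Yr t + hst v w * (Xr * Yr (s * t))
  /-- the linear automorphisms `ψ_s = φ ∘ I ∘ M_s` -/
  psi : G → (Ar G ≃ₗ[ℚ] Ar G)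
  psi_spec : ∀ (s : G) (L : List (ℕ × G)) (a : ℕ),
      psi s (wordP L * Xr ^ a) = phi (wordP (cumul s L) * Xr ^ a)
  /-- the diamond products `⋄_s : A_1 × A_r → A_r` -/
  D : G → A1 →ₗ[ℚ] Ar G →ₗ[ℚ] Ar G
  one_D : ∀ (s : G) (w : Ar G), D s 1 w = w
  D_one : ∀ (s : G) (v : A1), D s v 1 = psi s (phi (jm v))
  Dxx : ∀ (s : G) (v : A1) (w : Ar G), D s (v * X1) (w * Xr) =
      D s v (w * Xr) * Xr - D s (v * Y1) w * Xr
  Dyx : ∀ (s : G) (v : A1) (w : Ar G), D s (v * Y1) (w * Xr) =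
      D s v (w * Xr) * Yr 1 + D s (v * Y1) w * Xr
  Dxy : ∀ (s : G) (v : A1) (w : Ar G), D s (v * X1) (w * Yr 1) =
      D s v (w * Yr 1) * Xr + D s (v * X1) w * Yr 1
  Dyy : ∀ (s : G) (v : A1) (w : Ar G), D s (v * Y1) (w * Yr 1) =
      D s v (w * Yr 1) * Yr 1 - D s (v * X1) w * Yr 1
  Dxyt : ∀ (s t : G), t ≠ 1 → ∀ (v : A1) (w : Ar G), D s (v * X1) (w * Yr t) =
      D s v (w * Yr t) * Xr + D s v (w * (Xr + Yr t)) * Yr t - D s (v * Y1) w * Yr t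
  Dyyt : ∀ (s t : G), t ≠ 1 → ∀ (v : A1) (w : Ar G), D s (v * Y1) (w * Yr t) =
      D s v (w * Yr t) * Yr 1 - D s v (w * (Xr + Yr t)) * Yr t + D s (v * Y1) w * Yr t
  /-- `⋄_1` as a product `A_1 × A_1 → A_1` -/
  D1 : A1 →ₗ[ℚ] A1 →ₗ[ℚ] A1
  D1_spec : ∀ u v : A1, jm (D1 u v) = D 1 u (jm v)


/-! ### Auxiliary machinery for `statement13` -/

section Aux13
set_option linter.unusedSectionVars false

lemma zet_def {G : Type} [CommGroup G] : (zet : Ar G) = Xr + Yr 1 := rfl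

lemma iA_x : (ι ℚ LetA.x : A1) = X1 := rfl
lemma iA_y : (ι ℚ LetA.y : A1) = Y1 := rfl
lemma iR_x {G : Type} [CommGroup G] : (ι ℚ (LetR.x : LetR G) : Ar G) = Xr := rfl
lemma iR_y {G : Type} [CommGroup G] (t : G) : (ι ℚ (LetR.y t) : Ar G) = Yr t := rfl

/-- Reversed word product: `rev [a₁, …, aₙ] = ι aₙ ⋯ ι a₁`. -/
noncomputable def rev {X : Type} : List X → FreeAlgebra ℚ X
  | [] => 1
  | a :: L => rev L * ι ℚ a

lemma rev_nil {X : Type} : rev ([] : List X) = 1 := rfl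
lemma rev_cons {X : Type} (a : X) (L : List X) : rev (a :: L) = rev L * ι ℚ a := rfl

lemma rev_append {X : Type} (M L : List X) : rev (M ++ L) = rev L * rev M := by
  induction M with
  | nil => simp [rev_nil]
  | cons a M ih => rw [List.cons_append, rev_cons, rev_cons, ih, mul_assoc]

lemma span_rev_mul_mem {X : Type} {a b : FreeAlgebra ℚ X}
    (ha : a ∈ Submodule.span ℚ (Set.range (rev (X := X))))
    (hb : b ∈ Submodule.span ℚ (Set.range (rev (X := X)))) :
    a * b ∈ Submodule.span ℚ (Set.range (rev (X := X))) := by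
  induction ha using Submodule.span_induction with
  | mem x hx =>
    induction hb using Submodule.span_induction with
    | mem y hy =>
      obtain ⟨L, rfl⟩ := hx
      obtain ⟨M, rfl⟩ := hy
      exact Submodule.subset_span ⟨M ++ L, rev_append M L⟩
    | zero => rw [mul_zero]; exact Submodule.zero_mem _
    | add y z _ _ h1 h2 => rw [mul_add]; exact Submodule.add_mem _ h1 h2
    | smul c y _ h1 => rw [mul_smul_comm]; exact Submodule.smul_mem _ _ h1
  | zero => rw [zero_mul]; exact Submodule.zero_mem _
  | add y z _ _ h1 h2 => rw [add_mul]; exact Submodule.add_mem _ h1 h2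
  | smul c y _ h1 => rw [smul_mul_assoc]; exact Submodule.smul_mem _ _ h1

lemma mem_span_rev {X : Type} (v : FreeAlgebra ℚ X) :
    v ∈ Submodule.span ℚ (Set.range (rev (X := X))) := by
  induction v using FreeAlgebra.induction with
  | grade0 r =>
    rw [Algebra.algebraMap_eq_smul_one]
    exact Submodule.smul_mem _ _ (Submodule.subset_span ⟨[], rfl⟩)
  | grade1 x => exact Submodule.subset_span ⟨[x], by simp [rev_cons, rev_nil]⟩
  | mul a b ha hb => exact span_rev_mul_mem ha hb
  | add a b ha hb => exact Submodule.add_mem _ ha hb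

variable {G : Type} [CommGroup G]

lemma phi_Xr : phi (Xr : Ar G) = zet := by rw [Xr, phi, lift_ι_apply]

lemma phi_Yr_one : phi (Yr (1 : G)) = -(Yr 1) := by
  rw [Yr, phi, lift_ι_apply]
  show zdel 1 - zet = _
  rw [zdel, if_pos rfl, zet_def]
  abel

lemma jm_z1 : jm (X1 + Y1) = (zet : Ar G) := by
  rw [map_add, X1, Y1, jm, lift_ι_apply, lift_ι_apply, zet_def]

lemma phi_jm_z1 : phi (jm (X1 + Y1)) = (Xr : Ar G) := by
  rw [jm_z1, zet_def, map_add, phi_Xr, phi_Yr_one, zet_def]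
  abel

lemma wordP_nil : wordP ([] : List (ℕ × G)) = 1 := rfl

lemma wordP_cons (p : ℕ × G) (L : List (ℕ × G)) :
    wordP (p :: L) = Xr ^ p.1 * Yr p.2 * wordP L := by
  rw [wordP, wordP, List.map_cons, List.prod_cons]

lemma wordP_append (L L' : List (ℕ × G)) : wordP (L ++ L') = wordP L * wordP L' := by
  rw [wordP, wordP, wordP, List.map_append, List.prod_append]

lemma cumul_nil (g : G) : cumul g ([] : List (ℕ × G)) = [] := rfl

lemma cumul_cons (g : G) (p : ℕ × G) (L : List (ℕ × G)) :
    cumul g (p :: L) = (p.1, g * p.2) :: cumul (g * p.2) L := rfl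

variable (S : DiamondSetup G) (s : G)

lemma psi_Xr : S.psi s Xr = zet := by
  have h := S.psi_spec s [] 1
  rw [wordP_nil, cumul_nil, wordP_nil, pow_one, one_mul] at h
  rw [h, phi_Xr]

lemma psi_word_Xr (L : List (ℕ × G)) (a : ℕ) :
    S.psi s (Xr * (wordP L * Xr ^ a)) = zet * S.psi s (wordP L * Xr ^ a) := by
  cases L with
  | nil =>
    have e : Xr * (wordP ([] : List (ℕ × G)) * Xr ^ a) = wordP ([] : List (ℕ × G)) * Xr ^ (a + 1) := by
      rw [wordP_nil, one_mul, one_mul, pow_succ']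
    rw [e, S.psi_spec s [] (a + 1), S.psi_spec s [] a, cumul_nil, wordP_nil, one_mul, one_mul,
      map_pow, map_pow, phi_Xr, pow_succ']
  | cons p L =>
    obtain ⟨b, t⟩ := p
    have e : Xr * (wordP ((b, t) :: L) * Xr ^ a) = wordP ((b + 1, t) :: L) * Xr ^ a := by
      rw [wordP_cons, wordP_cons]
      simp only [pow_succ', mul_assoc]
    rw [e, S.psi_spec s ((b + 1, t) :: L) a, S.psi_spec s ((b, t) :: L) a, cumul_cons, cumul_cons,
      wordP_cons, wordP_cons]
    simp only [pow_succ', mul_assoc, map_mul, map_pow, phi_Xr]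

lemma rev_eq_wordP (M : List (LetR G)) : ∃ (L : List (ℕ × G)) (a : ℕ),
    rev M = wordP L * Xr ^ a := by
  induction M with
  | nil => exact ⟨[], 0, by rw [rev_nil, wordP_nil, pow_zero, one_mul]⟩
  | cons u M ih =>
    obtain ⟨L, a, h⟩ := ih
    cases u with
    | x => exact ⟨L, a + 1, by rw [rev_cons, h, iR_x, pow_succ, mul_assoc]⟩
    | y t =>
      refine ⟨L ++ [(a, t)], 0, ?_⟩
      rw [rev_cons, h, iR_y, pow_zero, mul_one, wordP_append, wordP_cons, wordP_nil, mul_one,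
        mul_assoc]

lemma psi_Xr_mul (u : Ar G) : S.psi s (Xr * u) = zet * S.psi s u := by
  induction mem_span_rev u using Submodule.span_induction with
  | mem x hx =>
    obtain ⟨M, rfl⟩ := hx
    obtain ⟨L, a, h⟩ := rev_eq_wordP M
    rw [h, psi_word_Xr]
  | zero => simp
  | add x y _ _ h1 h2 => rw [mul_add, map_add, map_add, h1, h2, mul_add]
  | smul c x _ h1 => rw [mul_smul_comm, map_smul, map_smul, h1, mul_smul_comm]

end Aux13

section Aux13b
set_option linter.unusedSectionVars false
set_option maxHeartbeats 1000000

variable {G : Type} [CommGroup G] (S : DiamondSetup G) (s : G)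

/-- The statement of `statement13` as a predicate. -/
def Pst (v : A1) (w : Ar G) : Prop :=
  S.D s ((X1 + Y1) * v) (zet * w) =
    zet * (S.D s v (zet * w) + S.D s ((X1 + Y1) * v) w - zet * S.D s v w)

/-- `(x+y) ⋄_s w = w z`. -/
lemma D_z1 (w : Ar G) : S.D s (X1 + Y1) w = w * zet := by
  induction mem_span_rev w using Submodule.span_induction with
  | mem x hx =>
    obtain ⟨M, rfl⟩ := hx
    cases M with
    | nil =>
      rw [rev_nil, S.D_one, phi_jm_z1, psi_Xr, one_mul]
    | cons u M =>
      rw [rev_cons]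
      cases u with
      | x =>
        rw [iR_x]
        have e1 := S.Dxx s 1 (rev M)
        have e2 := S.Dyx s 1 (rev M)
        rw [one_mul] at e1 e2
        simp only [S.one_D] at e1 e2
        simp only [map_add, LinearMap.add_apply]
        rw [e1, e2, zet_def]
        noncomm_ring
      | y t =>
        rw [iR_y]
        by_cases ht : t = 1
        · subst ht
          have e1 := S.Dxy s 1 (rev M)
          have e2 := S.Dyy s 1 (rev M)
          rw [one_mul] at e1 e2
          simp only [S.one_D] at e1 e2
          simp only [map_add, LinearMap.add_apply]
          rw [e1, e2, zet_def]
          noncomm_ring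
        · have e1 := S.Dxyt s t ht 1 (rev M)
          have e2 := S.Dyyt s t ht 1 (rev M)
          rw [one_mul] at e1 e2
          simp only [S.one_D] at e1 e2
          simp only [map_add, LinearMap.add_apply]
          rw [e1, e2, zet_def]
          noncomm_ring
  | zero => simp
  | add x y _ _ h1 h2 => rw [((S.D s) (X1 + Y1)).map_add x y, h1, h2, add_mul]
  | smul c x _ h1 => rw [((S.D s) (X1 + Y1)).map_smul c x, h1, smul_mul_assoc]

/-- `(zv) ⋄_s 1 = z (v ⋄_s 1)`. -/
lemma D_z1_one (v : A1) : S.D s ((X1 + Y1) * v) 1 = zet * S.D s v 1 := by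
  rw [S.D_one, S.D_one, map_mul, map_mul, phi_jm_z1, psi_Xr_mul]

lemma keyW1 : ∀ Lv : List LetA, Pst S s (rev Lv) 1 := by
  intro Lv
  induction Lv with
  | nil =>
    show S.D s ((X1 + Y1) * rev []) (zet * 1) = _
    rw [rev_nil, mul_one, mul_one, S.one_D, S.one_D, D_z1, D_z1]
    noncomm_ring
  | cons l Lv ih =>
    have ezet : ∀ p : A1, S.D s p zet = S.D s p Xr + S.D s p (Yr 1) := fun p => by
      rw [zet_def, map_add]
    rw [Pst, mul_one] at ih ⊢
    rw [ezet ((X1 + Y1) * rev Lv)] at ih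
    have hA := eq_sub_of_add_eq ih
    have l2a := D_z1_one S s (rev Lv)
    have l2x := D_z1_one S s (rev Lv * X1)
    have l2y := D_z1_one S s (rev Lv * Y1)
    rw [← mul_assoc] at l2x l2y
    rw [rev_cons, ← mul_assoc]
    cases l with
    | x =>
      rw [iA_x]
      have e1 := S.Dxx s ((X1 + Y1) * rev Lv) 1
      have e2 := S.Dxy s ((X1 + Y1) * rev Lv) 1
      have f1 := S.Dxx s (rev Lv) 1
      have f2 := S.Dxy s (rev Lv) 1
      rw [one_mul] at e1 e2 f1 f2
      rw [ezet ((X1 + Y1) * rev Lv * X1), ezet (rev Lv * X1), e1, e2, f1, f2, hA, l2x, l2y, l2a]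
      rw [ezet (rev Lv)]
      noncomm_ring
    | y =>
      rw [iA_y]
      have e1 := S.Dyx s ((X1 + Y1) * rev Lv) 1
      have e2 := S.Dyy s ((X1 + Y1) * rev Lv) 1
      have f1 := S.Dyx s (rev Lv) 1
      have f2 := S.Dyy s (rev Lv) 1
      rw [one_mul] at e1 e2 f1 f2
      rw [ezet ((X1 + Y1) * rev Lv * Y1), ezet (rev Lv * Y1), e1, e2, f1, f2, hA, l2x, l2y, l2a]
      rw [ezet (rev Lv)]
      noncomm_ring

lemma keyV1 (w : Ar G) : Pst S s 1 w := by
  rw [Pst, mul_one, S.one_D, S.one_D, D_z1, D_z1]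
  noncomm_ring

end Aux13b

section Aux13c
set_option linter.unusedSectionVars false
set_option maxHeartbeats 2000000

variable {G : Type} [CommGroup G] (S : DiamondSetup G) (s : G)

lemma keyPst : ∀ (k : ℕ) (Lv : List LetA) (Lw : List (LetR G)), Lw.length ≤ k →
    Pst S s (rev Lv) (rev Lw) := by
  intro k
  induction k with
  | zero =>
    intro Lv Lw h
    rw [List.length_eq_zero_iff.mp (Nat.le_zero.mp h), rev_nil]
    exact keyW1 S s Lv
  | succ k IHk =>
    intro Lv
    induction Lv with
    | nil =>
      intro Lw _
      rw [rev_nil]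
      exact keyV1 S s (rev Lw)
    | cons l Lv' IHv =>
      intro Lw hLw
      cases Lw with
      | nil => rw [rev_nil]; exact keyW1 S s (l :: Lv')
      | cons u Lw' =>
        have hw : Lw'.length ≤ k := by
          simp only [List.length_cons] at hLw; omega
        have hw1 : ∀ u' : LetR G, (u' :: Lw').length ≤ k + 1 := by
          intro u'; simp only [List.length_cons] at hLw ⊢; omega
        rw [Pst, rev_cons, rev_cons, ← mul_assoc, ← mul_assoc]
        cases l with
        | x =>
          rw [iA_x]
          have h3 := IHk (LetA.y :: Lv') Lw' hw
          rw [Pst, rev_cons, iA_y, ← mul_assoc] at h3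
          cases u with
          | x =>
            rw [iR_x]
            have h1 := IHv (LetR.x :: Lw') (hw1 _)
            rw [Pst, rev_cons, iR_x, ← mul_assoc] at h1
            rw [S.Dxx s ((X1 + Y1) * rev Lv') (zet * rev Lw'),
              S.Dxx s (rev Lv') (zet * rev Lw'),
              S.Dxx s ((X1 + Y1) * rev Lv') (rev Lw'),
              S.Dxx s (rev Lv') (rev Lw'), h1, h3]
            noncomm_ring
          | y t =>
            by_cases ht : t = 1
            · subst ht
              rw [iR_y]
              have h1 := IHv (LetR.y 1 :: Lw') (hw1 _)
              rw [Pst, rev_cons, iR_y, ← mul_assoc] at h1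
              have h3' := IHk (LetA.x :: Lv') Lw' hw
              rw [Pst, rev_cons, iA_x, ← mul_assoc] at h3'
              rw [S.Dxy s ((X1 + Y1) * rev Lv') (zet * rev Lw'),
                S.Dxy s (rev Lv') (zet * rev Lw'),
                S.Dxy s ((X1 + Y1) * rev Lv') (rev Lw'),
                S.Dxy s (rev Lv') (rev Lw'), h1, h3']
              noncomm_ring
            · rw [iR_y]
              have eexp : ∀ (p : A1) (q : Ar G),
                  S.D s p (q * (Xr + Yr t)) = S.D s p (q * Xr) + S.D s p (q * Yr t) :=
                fun p q => by rw [mul_add, map_add]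
              have h1 := IHv (LetR.x :: Lw') (hw1 _)
              rw [Pst, rev_cons, iR_x, ← mul_assoc] at h1
              have h2 := IHv (LetR.y t :: Lw') (hw1 _)
              rw [Pst, rev_cons, iR_y, ← mul_assoc] at h2
              rw [S.Dxyt s t ht ((X1 + Y1) * rev Lv') (zet * rev Lw'),
                S.Dxyt s t ht (rev Lv') (zet * rev Lw'),
                S.Dxyt s t ht ((X1 + Y1) * rev Lv') (rev Lw'),
                S.Dxyt s t ht (rev Lv') (rev Lw'),
                eexp ((X1 + Y1) * rev Lv') (zet * rev Lw'),
                eexp (rev Lv') (zet * rev Lw'),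
                eexp ((X1 + Y1) * rev Lv') (rev Lw'),
                eexp (rev Lv') (rev Lw'), h1, h2, h3]
              noncomm_ring
        | y =>
          rw [iA_y]
          cases u with
          | x =>
            rw [iR_x]
            have h1 := IHv (LetR.x :: Lw') (hw1 _)
            rw [Pst, rev_cons, iR_x, ← mul_assoc] at h1
            have h3 := IHk (LetA.y :: Lv') Lw' hw
            rw [Pst, rev_cons, iA_y, ← mul_assoc] at h3
            rw [S.Dyx s ((X1 + Y1) * rev Lv') (zet * rev Lw'),
              S.Dyx s (rev Lv') (zet * rev Lw'),
              S.Dyx s ((X1 + Y1) * rev Lv') (rev Lw'),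
              S.Dyx s (rev Lv') (rev Lw'), h1, h3]
            noncomm_ring
          | y t =>
            by_cases ht : t = 1
            · subst ht
              rw [iR_y]
              have h1 := IHv (LetR.y 1 :: Lw') (hw1 _)
              rw [Pst, rev_cons, iR_y, ← mul_assoc] at h1
              have h3' := IHk (LetA.x :: Lv') Lw' hw
              rw [Pst, rev_cons, iA_x, ← mul_assoc] at h3'
              rw [S.Dyy s ((X1 + Y1) * rev Lv') (zet * rev Lw'),
                S.Dyy s (rev Lv') (zet * rev Lw'),
                S.Dyy s ((X1 + Y1) * rev Lv') (rev Lw'),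
                S.Dyy s (rev Lv') (rev Lw'), h1, h3']
              noncomm_ring
            · rw [iR_y]
              have eexp : ∀ (p : A1) (q : Ar G),
                  S.D s p (q * (Xr + Yr t)) = S.D s p (q * Xr) + S.D s p (q * Yr t) :=
                fun p q => by rw [mul_add, map_add]
              have h1 := IHv (LetR.x :: Lw') (hw1 _)
              rw [Pst, rev_cons, iR_x, ← mul_assoc] at h1
              have h2 := IHv (LetR.y t :: Lw') (hw1 _)
              rw [Pst, rev_cons, iR_y, ← mul_assoc] at h2
              have h3 := IHk (LetA.y :: Lv') Lw' hw
              rw [Pst, rev_cons, iA_y, ← mul_assoc] at h3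
              rw [S.Dyyt s t ht ((X1 + Y1) * rev Lv') (zet * rev Lw'),
                S.Dyyt s t ht (rev Lv') (zet * rev Lw'),
                S.Dyyt s t ht ((X1 + Y1) * rev Lv') (rev Lw'),
                S.Dyyt s t ht (rev Lv') (rev Lw'),
                eexp ((X1 + Y1) * rev Lv') (zet * rev Lw'),
                eexp (rev Lv') (zet * rev Lw'),
                eexp ((X1 + Y1) * rev Lv') (rev Lw'),
                eexp (rev Lv') (rev Lw'), h1, h2, h3]
              noncomm_ring

lemma PstAll (v : A1) (w : Ar G) : Pst S s v w := by
  induction mem_span_rev v using Submodule.span_induction with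
  | mem x hx =>
    obtain ⟨Lv, rfl⟩ := hx
    induction mem_span_rev w using Submodule.span_induction with
    | mem y hy =>
      obtain ⟨Lw, rfl⟩ := hy
      exact keyPst S s Lw.length Lv Lw le_rfl
    | zero =>
      rw [Pst, mul_zero, map_zero]
      simp
    | add y z _ _ h1 h2 =>
      rw [Pst] at h1 h2 ⊢
      rw [mul_add, ((S.D s) ((X1 + Y1) * rev Lv)).map_add, ((S.D s) (rev Lv)).map_add,
        ((S.D s) ((X1 + Y1) * rev Lv)).map_add y z, ((S.D s) (rev Lv)).map_add y z, h1, h2]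
      noncomm_ring
    | smul c y _ h1 =>
      rw [Pst] at h1 ⊢
      rw [mul_smul_comm, ((S.D s) ((X1 + Y1) * rev Lv)).map_smul, ((S.D s) (rev Lv)).map_smul,
        ((S.D s) ((X1 + Y1) * rev Lv)).map_smul c y, ((S.D s) (rev Lv)).map_smul c y, h1]
      simp only [mul_smul_comm, ← smul_add, ← smul_sub]
  | zero =>
    rw [Pst, mul_zero, map_zero]
    simp
  | add x y _ _ h1 h2 =>
    rw [Pst] at h1 h2 ⊢
    rw [mul_add, (S.D s).map_add ((X1 + Y1) * x) ((X1 + Y1) * y), (S.D s).map_add x y]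
    simp only [LinearMap.add_apply]
    rw [h1, h2]
    noncomm_ring
  | smul c x _ h1 =>
    rw [Pst] at h1 ⊢
    rw [mul_smul_comm, (S.D s).map_smul c ((X1 + Y1) * x), (S.D s).map_smul c x]
    simp only [LinearMap.smul_apply]
    rw [h1]
    simp only [mul_smul_comm, ← smul_add, ← smul_sub]

end Aux13c
/-- For all `s ∈ μ_r`, `v ∈ A_1`, `w ∈ A_r`:
`(zv) ⋄_s (zw) = z(v ⋄_s zw + zv ⋄_s w − z(v ⋄_s w))`. -/
theorem statement13 {G : Type} [CommGroup G] (S : DiamondSetup G)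
    (s : G) (v : A1) (w : Ar G) :
    S.D s ((X1 + Y1) * v) (zet * w) =
      zet * (S.D s v (zet * w) + S.D s ((X1 + Y1) * v) w - zet * S.D s v w) := by
  have h := PstAll S s v w
  rwa [Pst] at h
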